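/- Suppose Σ_η ∈ ℝ^{N_y×N_y} is symmetric positive definite, GᵀΣ_η⁻¹G is positive definite, and define C_* = (GᵀΣ_η⁻¹G)⁻¹. For any α ∈ (0,1], if one chooses Σ_ν = 2Σ_η and Σ_ω = (2 − α²) C_*, then C_* solves the steady-state covariance equation: C_*⁻¹ = GᵀΣ_ν⁻¹G + (α²C_* + Σ_ω)⁻¹, and moreover α²C_* + Σ_ω = 2C_*. -/
import Mathlib


open Matrix

/-- Suppose `Sη` is symmetric positive definite, `Gᵀ Sη⁻¹ G` is
positive definite, and define `Cstar = (Gᵀ Sη⁻¹ G)⁻¹`. For any `α ∈ (0,1]`, if one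
chooses `Sν = 2 Sη` and `Sω = (2 − α²) Cstar`, then `Cstar` solves the steady-state
covariance equation `Cstar⁻¹ = Gᵀ Sν⁻¹ G + (α² Cstar + Sω)⁻¹`, and moreover
`α² Cstar + Sω = 2 Cstar`. -/
theorem steady_state_covariance_explicit_solution
    {Nθ Ny : ℕ} (hNθ : 0 < Nθ) (hNy : 0 < Ny)
    (G : Matrix (Fin Ny) (Fin Nθ) ℝ)
    (Sη : Matrix (Fin Ny) (Fin Ny) ℝ) (hSη : Sη.PosDef)
    (hGG : (Gᵀ * Sη⁻¹ * G).PosDef)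
    (Cstar : Matrix (Fin Nθ) (Fin Nθ) ℝ) (hCstar : Cstar = (Gᵀ * Sη⁻¹ * G)⁻¹)
    (α : ℝ) (hα : α ∈ Set.Ioc (0 : ℝ) 1)
    (Sν : Matrix (Fin Ny) (Fin Ny) ℝ) (hSν : Sν = (2 : ℝ) • Sη)
    (Sω : Matrix (Fin Nθ) (Fin Nθ) ℝ) (hSω : Sω = (2 - α ^ 2) • Cstar) :
    Cstar⁻¹ = Gᵀ * Sν⁻¹ * G + (α ^ 2 • Cstar + Sω)⁻¹ ∧
      α ^ 2 • Cstar + Sω = (2 : ℝ) • Cstar := by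
  have h2 : α ^ 2 • Cstar + Sω = (2 : ℝ) • Cstar := by
    rw [hSω, ← add_smul]; ring_nf
  refine ⟨?_, h2⟩
  have hdet : IsUnit (Gᵀ * Sη⁻¹ * G).det := isUnit_iff_ne_zero.mpr hGG.det_pos.ne'
  have hCinv : Cstar⁻¹ = Gᵀ * Sη⁻¹ * G := by
    rw [hCstar, Matrix.nonsing_inv_nonsing_inv _ hdet]
  have hCdet : IsUnit Cstar.det := by
    rw [hCstar]; exact (Matrix.isUnit_nonsing_inv_det _ hdet)
  have h2inv : ((2:ℝ) • Cstar)⁻¹ = (2:ℝ)⁻¹ • Cstar⁻¹ := by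
    apply Matrix.inv_eq_left_inv
    rw [Matrix.smul_mul, Matrix.mul_smul, smul_smul, Matrix.nonsing_inv_mul _ hCdet]
    norm_num
  have hSνinv : Sν⁻¹ = (2:ℝ)⁻¹ • Sη⁻¹ := by
    rw [hSν]
    apply Matrix.inv_eq_left_inv
    rw [Matrix.smul_mul, Matrix.mul_smul, smul_smul,
      Matrix.nonsing_inv_mul _ (isUnit_iff_ne_zero.mpr hSη.det_pos.ne')]
    norm_num
  rw [h2, h2inv, hSνinv, hCinv, Matrix.mul_smul, Matrix.smul_mul, ← smul_add]
  rw [← two_smul ℝ (Gᵀ * Sη⁻¹ * G), smul_smul]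
  norm_num
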